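/- Let f be a mixed polynomial depending on the variable u, P a positive weight vector, and f_P the P-relative face function (the sum of monomials of f whose radial degree equals d(P;f)). Then the following are equivalent: (i) d(P; f_u) = d(P; f) − p₁; (ii) (f_u)_P = (f_P)_u; (iii) f_P depends on the variable u. -/
import Mathlib


open Complex

noncomputable section

/-- The index of a mixed monomial: `((ν₁,ν₂),(μ₁,μ₂))`. -/
abbrev MixedIdx : Type := (ℕ × ℕ) × (ℕ × ℕ)

/-- The coefficients `c_{ν,μ}` of a mixed polynomial `f(z,z̄) = Σ c_{ν,μ} z^ν z̄^μ`. -/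
abbrev MixedCoeff : Type := MixedIdx → ℂ

/-- The exponent `ν + μ` of a mixed monomial index. -/
def expo (p : MixedIdx) : ℕ × ℕ := (p.1.1 + p.2.1, p.1.2 + p.2.2)

/-- The linear form `ℓ_P` associated to a weight vector `P`; `ℓ_P ∘ expo` is the
radial degree `rdeg_P`. -/
def ellP (P : ℕ × ℕ) (w : ℕ × ℕ) : ℕ := P.1 * w.1 + P.2 * w.2

/-- The mixed monomial `u^ν₁ v^ν₂ ū^μ₁ v̄^μ₂`. -/
def mono (p : MixedIdx) (u v : ℂ) : ℂ :=
  u ^ p.1.1 * v ^ p.1.2 * (starRingEnd ℂ u) ^ p.2.1 * (starRingEnd ℂ v) ^ p.2.2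

/-- Evaluation of the mixed polynomial with coefficients `c` at `(u,v) ∈ ℂ²`. -/
def eval (c : MixedCoeff) (u v : ℂ) : ℂ := ∑ᶠ p, c p * mono p u v

/-- `c` has finitely many nonzero coefficients (so it really is a polynomial). -/
def FiniteSupp (c : MixedCoeff) : Prop := (Function.support c).Finite

/-- Wirtinger derivative `∂/∂u` at the level of coefficients. -/
def Du (c : MixedCoeff) : MixedCoeff := fun p => (p.1.1 + 1 : ℂ) * c ((p.1.1 + 1, p.1.2), p.2)

/-- Wirtinger derivative `∂/∂ū` at the level of coefficients. -/
def Dub (c : MixedCoeff) : MixedCoeff := fun p => (p.2.1 + 1 : ℂ) * c (p.1, (p.2.1 + 1, p.2.2))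

/-- Wirtinger derivative `∂/∂v` at the level of coefficients. -/
def Dv (c : MixedCoeff) : MixedCoeff := fun p => (p.1.2 + 1 : ℂ) * c ((p.1.1, p.1.2 + 1), p.2)

/-- Wirtinger derivative `∂/∂v̄` at the level of coefficients. -/
def Dvb (c : MixedCoeff) : MixedCoeff := fun p => (p.2.2 + 1 : ℂ) * c (p.1, (p.2.1, p.2.2 + 1))

/-- `(u,v)` is a critical point of the mixed polynomial `c` (the real Jacobian of the
associated map `ℝ⁴ → ℝ²` has rank `≤ 1`), expressed through Oka's equations
`s₁ = s₂ = s₃ = 0`. -/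
def Crit (c : MixedCoeff) (u v : ℂ) : Prop :=
  eval (Du c) u v * starRingEnd ℂ (eval (Dvb c) u v)
      - starRingEnd ℂ (eval (Dub c) u v) * eval (Dv c) u v = 0 ∧
  ‖eval (Du c) u v‖ = ‖eval (Dub c) u v‖ ∧
  ‖eval (Dv c) u v‖ = ‖eval (Dvb c) u v‖

/-- `d(P; c)`: the minimal radial degree of a monomial of `c` w.r.t. the weight `P`. -/
def dmin (P : ℕ × ℕ) (c : MixedCoeff) : ℕ :=
  sInf {n : ℕ | ∃ p, c p ≠ 0 ∧ ellP P (expo p) = n}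

/-- The `P`-relative face function: the monomials of minimal radial degree. -/
def face (P : ℕ × ℕ) (c : MixedCoeff) : MixedCoeff :=
  fun p => if ellP P (expo p) = dmin P c then c p else 0

/-- The face function of the vertex `w`: all monomials with exponent `w`. -/
def vertexFace (w : ℕ × ℕ) (c : MixedCoeff) : MixedCoeff :=
  fun p => if expo p = w then c p else 0

/-- `P` is the (primitive, positive) weight vector of a compact 1-face of the Newton
boundary of `c`: at least two distinct exponents realize the minimal radial degree. -/
def IsFaceWeight (c : MixedCoeff) (P : ℕ × ℕ) : Prop :=
  0 < P.1 ∧ 0 < P.2 ∧ Nat.gcd P.1 P.2 = 1 ∧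
  ∃ p q, c p ≠ 0 ∧ c q ≠ 0 ∧ expo p ≠ expo q ∧
    ellP P (expo p) = dmin P c ∧ ellP P (expo q) = dmin P c

/-- `P` is the weight vector of the steepest compact 1-face (the face `Δ(P₁)`). -/
def IsSteepest (c : MixedCoeff) (P : ℕ × ℕ) : Prop :=
  IsFaceWeight c P ∧ ∀ Q, IsFaceWeight c Q → Q.1 * P.2 ≤ P.1 * Q.2

/-- `P` is the weight vector of the least steep compact 1-face (the face `Δ(P_N)`). -/
def IsLeastSteep (c : MixedCoeff) (P : ℕ × ℕ) : Prop :=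
  IsFaceWeight c P ∧ ∀ Q, IsFaceWeight c Q → P.1 * Q.2 ≤ Q.1 * P.2

/-- `w` is a non-extreme vertex of the Newton boundary: a vertex (an exponent of `c`
lying on the boundary) bounding two different compact 1-faces. -/
def NonExtremeVertex (c : MixedCoeff) (w : ℕ × ℕ) : Prop :=
  (∃ p, c p ≠ 0 ∧ expo p = w) ∧
  ∃ P Q, IsFaceWeight c P ∧ IsFaceWeight c Q ∧ P.1 * Q.2 ≠ Q.1 * P.2 ∧
    ellP P w = dmin P c ∧ ellP Q w = dmin Q c

/-- `c` has an inner Newton non-degenerate boundary. -/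
def InnerNonDeg (c : MixedCoeff) : Prop :=
  (∀ P, IsSteepest c P → ∀ u v : ℂ, v ≠ 0 →
      eval (face P c) u v = 0 → ¬ Crit (face P c) u v) ∧
  (∀ P, IsLeastSteep c P → ∀ u v : ℂ, u ≠ 0 →
      eval (face P c) u v = 0 → ¬ Crit (face P c) u v) ∧
  (∀ P, IsFaceWeight c P → ∀ u v : ℂ, u ≠ 0 → v ≠ 0 →
      eval (face P c) u v = 0 → ¬ Crit (face P c) u v) ∧
  (∀ w, NonExtremeVertex c w → ∀ u v : ℂ, u ≠ 0 → v ≠ 0 →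
      eval (vertexFace w c) u v = 0 → ¬ Crit (vertexFace w c) u v)

/-- `c` has a strongly inner Newton non-degenerate boundary. -/
def StronglyInnerNonDeg (c : MixedCoeff) : Prop :=
  (∀ P, IsSteepest c P → ∀ u v : ℂ, v ≠ 0 → ¬ Crit (face P c) u v) ∧
  (∀ P, IsLeastSteep c P → ∀ u v : ℂ, u ≠ 0 → ¬ Crit (face P c) u v) ∧
  (∀ P, IsFaceWeight c P → ∀ u v : ℂ, u ≠ 0 → v ≠ 0 → ¬ Crit (face P c) u v) ∧
  (∀ w, NonExtremeVertex c w → ∀ u v : ℂ, u ≠ 0 → v ≠ 0 → ¬ Crit (vertexFace w c) u v)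

/-- Oka's Newton non-degeneracy: for every compact face (equivalently, for every
positive weight vector `Q`) the face function has no critical points on its zero set
in `(ℂ*)²`. -/
def NewtonNonDeg (c : MixedCoeff) : Prop :=
  ∀ Q : ℕ × ℕ, 0 < Q.1 → 0 < Q.2 → ∀ u v : ℂ, u ≠ 0 → v ≠ 0 →
    eval (face Q c) u v = 0 → ¬ Crit (face Q c) u v

/-- Oka's strong Newton non-degeneracy: every face function has no critical points
in `(ℂ*)²`. -/
def StronglyNewtonNonDeg (c : MixedCoeff) : Prop :=
  ∀ Q : ℕ × ℕ, 0 < Q.1 → 0 < Q.2 → ∀ u v : ℂ, u ≠ 0 → v ≠ 0 →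
    ¬ Crit (face Q c) u v

/-- The Newton boundary meets the horizontal axis. -/
def UConvenient (c : MixedCoeff) : Prop := ∃ p, c p ≠ 0 ∧ (expo p).2 = 0

/-- The Newton boundary meets the vertical axis. -/
def VConvenient (c : MixedCoeff) : Prop := ∃ p, c p ≠ 0 ∧ (expo p).1 = 0

/-- The monomial index `p` lies on the Newton boundary of `c`. -/
def OnBoundary (c : MixedCoeff) (p : MixedIdx) : Prop :=
  ∃ Q : ℕ × ℕ, 0 < Q.1 ∧ 0 < Q.2 ∧ ellP Q (expo p) = dmin Q c

private lemma ell_shift_aux (P : ℕ × ℕ) (p : MixedIdx) :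
    ellP P (expo ((p.1.1 + 1, p.1.2), p.2)) = ellP P (expo p) + P.1 := by
  simp only [ellP, expo]
  ring

/-- for a mixed polynomial depending on `u`, the following are
equivalent: (i) `d(P;f_u) = d(P;f) − p₁`; (ii) `(f_u)_P = (f_P)_u`;
(iii) the face function `f_P` depends on `u`. -/
theorem dmin_face_deriv_tfae
    (P : ℕ × ℕ) (hP1 : 0 < P.1) (hP2 : 0 < P.2)
    (c : MixedCoeff) (hfin : FiniteSupp c)
    (hdep : ∃ p, c p ≠ 0 ∧ 0 < p.1.1) :
    List.TFAE [
      (dmin P (Du c) : ℤ) = (dmin P c : ℤ) - P.1,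
      face P (Du c) = Du (face P c),
      ∃ p, face P c p ≠ 0 ∧ 0 < p.1.1 ] := by
  have castne : ∀ n : ℕ, ((n : ℂ) + 1) ≠ 0 := fun n => by
    exact_mod_cast Nat.succ_ne_zero n
  have key : ∀ p : MixedIdx, c p ≠ 0 → 0 < p.1.1 →
      Du c ((p.1.1 - 1, p.1.2), p.2) ≠ 0 := by
    intro p hp hp1
    have h1 : p.1.1 - 1 + 1 = p.1.1 := by omega
    have hidx : (((((p.1.1 - 1, p.1.2), p.2) : MixedIdx).1.1 + 1,
        (((p.1.1 - 1, p.1.2), p.2) : MixedIdx).1.2), (((p.1.1 - 1, p.1.2), p.2) : MixedIdx).2)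
        = p := by
      ext <;> simp [h1]
    simp only [Du]
    rw [show ((((p.1.1 - 1, p.1.2), p.2) : MixedIdx).1.1 + 1,
        (((p.1.1 - 1, p.1.2), p.2) : MixedIdx).1.2) = p.1 from congrArg Prod.fst hidx]
    exact mul_ne_zero (castne _) (by simpa using hp)
  have ell_pred : ∀ p : MixedIdx, 0 < p.1.1 →
      ellP P (expo (((p.1.1 - 1, p.1.2), p.2) : MixedIdx)) + P.1 = ellP P (expo p) := by
    intro p hp1
    obtain ⟨a, ha⟩ : ∃ a, p.1.1 = a + 1 := ⟨p.1.1 - 1, by omega⟩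
    simp only [ellP, expo, ha, Nat.add_sub_cancel]
    ring
  obtain ⟨p0, hp0, hpos⟩ := hdep
  have hDne : {n : ℕ | ∃ p, Du c p ≠ 0 ∧ ellP P (expo p) = n}.Nonempty :=
    ⟨_, _, key p0 hp0 hpos, rfl⟩
  obtain ⟨q1, hq1, hq1d0⟩ := Nat.sInf_mem hDne
  have hq1d : ellP P (expo q1) = dmin P (Du c) := hq1d0
  have hc1 : c ((q1.1.1 + 1, q1.1.2), q1.2) ≠ 0 := by
    intro h
    apply hq1
    simp [Du, h]
  have hge : dmin P c ≤ dmin P (Du c) + P.1 := by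
    rw [← hq1d, ← ell_shift_aux]
    exact Nat.sInf_le ⟨_, hc1, rfl⟩
  tfae_have 1 → 3
  | h1 => by
    have hd : dmin P c = dmin P (Du c) + P.1 := by omega
    refine ⟨((q1.1.1 + 1, q1.1.2), q1.2), ?_, Nat.succ_pos _⟩
    simp only [face, ell_shift_aux, hq1d, ← hd, if_pos rfl]
    exact hc1
  tfae_have 3 → 1
  | h3 => by
    obtain ⟨p, hp, hp1⟩ := h3
    have hℓ : ellP P (expo p) = dmin P c := by
      by_contra h
      simp [face, h] at hp
    have hcp : c p ≠ 0 := by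
      intro h
      simp [face, h] at hp
    have hle : dmin P (Du c) ≤ ellP P (expo (((p.1.1 - 1, p.1.2), p.2) : MixedIdx)) :=
      Nat.sInf_le ⟨_, key p hcp hp1, rfl⟩
    have hell := ell_pred p hp1
    omega
  tfae_have 3 → 2
  | h3 => by
    have h1 : (dmin P (Du c) : ℤ) = (dmin P c : ℤ) - P.1 := by
      obtain ⟨p, hp, hp1⟩ := h3
      have hℓ : ellP P (expo p) = dmin P c := by
        by_contra h
        simp [face, h] at hp
      have hcp : c p ≠ 0 := by
        intro h
        simp [face, h] at hp
      have hle : dmin P (Du c) ≤ ellP P (expo (((p.1.1 - 1, p.1.2), p.2) : MixedIdx)) :=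
        Nat.sInf_le ⟨_, key p hcp hp1, rfl⟩
      have hell := ell_pred p hp1
      omega
    have hd : dmin P c = dmin P (Du c) + P.1 := by omega
    funext p
    have hcond : (ellP P (expo p) = dmin P (Du c)) ↔
        (ellP P (expo (((p.1.1 + 1, p.1.2), p.2) : MixedIdx)) = dmin P c) := by
      rw [ell_shift_aux, hd]
      omega
    simp only [face, Du]
    by_cases h : ellP P (expo p) = dmin P (Du c)
    · rw [if_pos h, if_pos (hcond.1 h)]
    · rw [if_neg h, if_neg (fun hh => h (hcond.2 hh)), mul_zero]
  tfae_have 2 → 3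
  | h2 => by
    by_contra h3
    push_neg at h3
    have hz : Du (face P c) = 0 := by
      funext p
      simp only [Du]
      rcases eq_or_ne (face P c ((p.1.1 + 1, p.1.2), p.2)) 0 with h | h
      · simp [h]
      · exact absurd (Nat.succ_pos p.1.1) (by simpa using h3 _ h)
    have hne : face P (Du c) q1 ≠ 0 := by
      simp only [face, hq1d, if_pos rfl]
      exact hq1
    rw [h2, hz] at hne
    exact hne rfl
  tfae_finish
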